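/- For every C¹ loop c : [0,1] → ℝ² ∖ {(0,0)} with c(0) = c(1), the work of the vortex 1-form along c is an integer multiple of 2π: W(c,f) ∈ 2πℤ. -/

import Mathlib

open Real

/-- The work of the vortex 1-form `f_x = -y/(x²+y²)`, `f_y = x/(x²+y²)` along any C¹ loop
`c : [0,1] → ℝ² ∖ {(0,0)}` with `c 0 = c 1` is an integer multiple of `2π`. -/
theorem work_of_vortex_form_along_loop_mem_zmultiples_two_pi
    (c : ℝ → ℝ × ℝ) (hc : ContDiff ℝ 1 c)
    (hc0 : ∀ t ∈ Set.Icc (0 : ℝ) 1, c t ≠ (0, 0))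
    (hloop : c 0 = c 1) :
    ∃ n : ℤ,
      ∫ t in (0 : ℝ)..1,
        ((-(c t).2 / ((c t).1 ^ 2 + (c t).2 ^ 2)) * deriv (fun s => (c s).1) t +
         ((c t).1 / ((c t).1 ^ 2 + (c t).2 ^ 2)) * deriv (fun s => (c s).2) t)
      = 2 * π * n := by
  -- the complexified curve
  set z : ℝ → ℂ := fun t => ((c t).1 : ℂ) + (c t).2 * Complex.I with hzdef
  have hc1 : ContDiff ℝ 1 (fun t => (c t).1) := contDiff_fst.comp hc
  have hc2 : ContDiff ℝ 1 (fun t => (c t).2) := contDiff_snd.comp hc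
  have hzC : ContDiff ℝ 1 z := by
    exact (Complex.ofRealCLM.contDiff.comp hc1).add
      ((Complex.ofRealCLM.contDiff.comp hc2).mul contDiff_const)
  have hzne : ∀ t ∈ Set.Icc (0:ℝ) 1, z t ≠ 0 := by
    intro t ht h0
    apply hc0 t ht
    have hre := congrArg Complex.re h0
    have him := congrArg Complex.im h0
    simp [hzdef] at hre him
    exact Prod.ext hre him
  have hder : ∀ t, HasDerivAt z
      (Complex.ofReal (deriv (fun s => (c s).1) t) +
       Complex.ofReal (deriv (fun s => (c s).2) t) * Complex.I) t := by
    intro t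
    have h1 : HasDerivAt (fun s => (c s).1) (deriv (fun s => (c s).1) t) t :=
      ((hc1.differentiable one_ne_zero) t).hasDerivAt
    have h2 : HasDerivAt (fun s => (c s).2) (deriv (fun s => (c s).2) t) t :=
      ((hc2.differentiable one_ne_zero) t).hasDerivAt
    exact (h1.ofReal_comp).add (h2.ofReal_comp.mul_const Complex.I)
  set w : ℝ → ℂ := fun t => deriv z t / z t with hwdef
  have hderivcont : Continuous (deriv z) := hzC.continuous_deriv le_rfl
  have hwcont : ContinuousOn w (Set.Icc 0 1) :=
    hderivcont.continuousOn.div hzC.continuous.continuousOn hzne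
  have hwint : ∀ u ∈ Set.Icc (0:ℝ) 1, IntervalIntegrable w MeasureTheory.volume 0 u := by
    intro u hu
    apply ContinuousOn.intervalIntegrable
    apply hwcont.mono
    rw [Set.uIcc_of_le hu.1]
    exact Set.Icc_subset_Icc le_rfl hu.2
  set g : ℝ → ℂ := fun u => ∫ s in (0:ℝ)..u, w s with hgdef
  have hgcont : ContinuousOn g (Set.Icc 0 1) := by
    have := intervalIntegral.continuousOn_primitive_interval
      (f := w) (μ := MeasureTheory.volume) (a := (0:ℝ)) (b := 1)
      (by rw [Set.uIcc_of_le zero_le_one]; exact hwcont.integrableOn_Icc)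
    rwa [Set.uIcc_of_le zero_le_one] at this
  have hwmeas : StronglyMeasurableAtFilter w (nhdsWithin 0 (Set.Ici 0)) MeasureTheory.volume ∧
      True := ⟨(hderivcont.measurable.div hzC.continuous.measurable).aestronglyMeasurable.stronglyMeasurableAtFilter, trivial⟩
  have hgder : ∀ t ∈ Set.Ico (0:ℝ) 1, HasDerivWithinAt g (w t) (Set.Ici t) t := by
    intro t ht
    have htIcc : t ∈ Set.Icc (0:ℝ) 1 := ⟨ht.1, ht.2.le⟩
    have hwat : ContinuousAt w t :=
      (hderivcont.continuousAt).div hzC.continuous.continuousAt (hzne t htIcc)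
    exact intervalIntegral.integral_hasDerivWithinAt_right (hwint t htIcc)
      (hderivcont.measurable.div hzC.continuous.measurable).aestronglyMeasurable.stronglyMeasurableAtFilter
      hwat.continuousWithinAt
  set F : ℝ → ℂ := fun t => z t * Complex.exp (-g t) with hFdef
  have hFcont : ContinuousOn F (Set.Icc 0 1) :=
    hzC.continuous.continuousOn.mul (Complex.continuous_exp.comp_continuousOn hgcont.neg)
  have hFder : ∀ t ∈ Set.Ico (0:ℝ) 1, HasDerivWithinAt F 0 (Set.Ici t) t := by
    intro t ht
    have htIcc : t ∈ Set.Icc (0:ℝ) 1 := ⟨ht.1, ht.2.le⟩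
    have hzt := hzne t htIcc
    have h1 : HasDerivWithinAt z (deriv z t) (Set.Ici t) t :=
      ((hzC.differentiable one_ne_zero t).hasDerivAt).hasDerivWithinAt
    have h2 : HasDerivWithinAt (fun u => Complex.exp (-g u))
        (Complex.exp (-g t) * (-(w t))) (Set.Ici t) t := ((hgder t ht).neg).cexp
    have := h1.mul h2
    convert this using 1
    · rfl
    · rfl
    rw [hwdef]
    field_simp
    ring
  have hconst := constant_of_has_deriv_right_zero hFcont hFder 1 (by norm_num)
  have hg0 : g 0 = 0 := intervalIntegral.integral_same
  have hz0 : z 0 ≠ 0 := hzne 0 (by norm_num)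
  have hexp : Complex.exp (-g 1) = 1 := by
    have hF0 : F 0 = z 0 := by simp [hFdef, hg0]
    have hz10 : z 1 = z 0 := by simp only [hzdef, ← hloop]
    have hF1 : F 1 = z 0 * Complex.exp (-g 1) := by
      simp only [hFdef]; rw [hz10]
    rw [hF1, hF0] at hconst
    field_simp at hconst
    exact hconst
  obtain ⟨n, hn⟩ := Complex.exp_eq_one_iff.mp hexp
  refine ⟨-n, ?_⟩
  have hg1 : g 1 = (-n : ℂ) * (2 * π * Complex.I) := by
    have : g 1 = -(-g 1) := by ring
    rw [this, hn]; push_cast; ring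
  -- the real integral equals the imaginary part of g 1
  have him : (g 1).im = 2 * π * (-n : ℤ) := by
    rw [hg1]; simp; ring
  rw [← him]
  have hcomm : Complex.imCLM (∫ s in (0:ℝ)..1, w s) = ∫ s in (0:ℝ)..1, Complex.imCLM (w s) :=
    (Complex.imCLM.intervalIntegral_comp_comm (hwint 1 (by norm_num))).symm
  have : (g 1).im = ∫ s in (0:ℝ)..1, (w s).im := hcomm
  rw [this]
  apply intervalIntegral.integral_congr
  intro s hs
  rw [Set.uIcc_of_le zero_le_one] at hs
  have hderz : deriv z s = Complex.ofReal (deriv (fun u => (c u).1) s) +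
      Complex.ofReal (deriv (fun u => (c u).2) s) * Complex.I := (hder s).deriv
  simp only [hwdef, Complex.div_im, hderz, Complex.normSq_apply]
  simp [hzdef]
  ring
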